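/- arXiv:1002.1345 — 3 statements merged into one kernel-verified Lean document; each statement's English description precedes it below -/
import Mathlib

section
/- Let R be a commutative ring with identity and let a_1,...,a_k be a regular sequence in R. If F(t_1,...,t_k) is a homogeneous polynomial in k variables with coefficients in R such that F(a_1,...,a_k) = 0, then every coefficient of F lies in the ideal (a_1,...,a_k). -/
open MvPolynomial Ideal

section QuasiRegularAux

variable {R : Type*} [CommRing R]

private lemma hqr_isHom_iff {σ : Type*} {φ : MvPolynomial σ R} {n : ℕ} :
    φ.IsHomogeneous n ↔ ∀ ⦃m⦄, φ.coeff m ≠ 0 → Finsupp.degree m = n := by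
  unfold MvPolynomial.IsHomogeneous MvPolynomial.IsWeightedHomogeneous
  show (∀ ⦃d⦄, _ → Finsupp.weight (fun _ => 1) d = n) ↔ _
  rw [← Finsupp.degree_eq_weight_one]

private lemma hqr_prod_pow_mem {k : ℕ} (a : Fin k → R) (s : Finset (Fin k)) (m : Fin k →₀ ℕ) :
    (∏ i ∈ s, a i ^ m i) ∈ (Ideal.span (Set.range a)) ^ (∑ i ∈ s, m i) := by
  classical
  induction s using Finset.induction with
  | empty => simp
  | insert _ _ hx ih =>
    rw [Finset.prod_insert hx, Finset.sum_insert hx, pow_add]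
    exact Ideal.mul_mem_mul (Ideal.pow_mem_pow (Ideal.subset_span (Set.mem_range_self _)) _) ih

private lemma hqr_eval_mem_mul_pow {k : ℕ} (a : Fin k → R) {n : ℕ} {F : MvPolynomial (Fin k) R}
    (hF : F.IsHomogeneous n) (K : Ideal R) (hc : ∀ m, F.coeff m ∈ K) :
    MvPolynomial.eval a F ∈ K * (Ideal.span (Set.range a)) ^ n := by
  classical
  rw [MvPolynomial.eval_eq]
  refine Ideal.sum_mem _ fun m hm => ?_
  have hm' : F.coeff m ≠ 0 := MvPolynomial.mem_support_iff.mp hm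
  have hdeg : Finsupp.degree m = n := hqr_isHom_iff.mp hF hm'
  have : (∏ i ∈ m.support, a i ^ m i) ∈ (Ideal.span (Set.range a)) ^ n := by
    rw [← hdeg]; exact hqr_prod_pow_mem a _ m
  exact Ideal.mul_mem_mul (hc m) this

private lemma hqr_eval_mem_pow {k : ℕ} (a : Fin k → R) {n : ℕ} {F : MvPolynomial (Fin k) R}
    (hF : F.IsHomogeneous n) :
    MvPolynomial.eval a F ∈ (Ideal.span (Set.range a)) ^ n := by
  have := hqr_eval_mem_mul_pow a hF ⊤ (fun m => trivial)
  rwa [Ideal.top_mul] at this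

private lemma hqr_mem_pow_iff {k : ℕ} (a : Fin k → R) {n : ℕ} {x : R} :
    x ∈ (Ideal.span (Set.range a)) ^ n ↔
      ∃ F : MvPolynomial (Fin k) R, F.IsHomogeneous n ∧ MvPolynomial.eval a F = x := by
  constructor
  · induction n generalizing x with
    | zero => intro _; exact ⟨MvPolynomial.C x, MvPolynomial.isHomogeneous_C _ _, by simp⟩
    | succ n ih =>
      intro hx
      rw [pow_succ] at hx
      refine Submodule.mul_induction_on hx ?_ ?_
      · intro y hy z hz
        obtain ⟨P, hP, hPe⟩ := ih hy
        obtain ⟨c, hc⟩ := Ideal.mem_span_range_iff_exists_fun.mp hz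
        refine ⟨P * ∑ i, MvPolynomial.C (c i) * MvPolynomial.X i, ?_, by simp [hPe, hc]⟩
        exact hP.mul (MvPolynomial.IsHomogeneous.sum _ _ _
          fun i _ => MvPolynomial.isHomogeneous_C_mul_X _ _)
      · rintro y z ⟨P, hP, hPe⟩ ⟨Q, hQ, hQe⟩
        exact ⟨P + Q, hP.add hQ, by simp [hPe, hQe]⟩
  · rintro ⟨F, hF, rfl⟩; exact hqr_eval_mem_pow a hF

private lemma hqr_pow_sup_le (J B : Ideal R) :
    ∀ m : ℕ, (J ⊔ B) ^ (m + 1) ≤ J ^ (m + 1) ⊔ B * (J ⊔ B) ^ m := by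
  intro m
  induction m with
  | zero => simp [Ideal.mul_top]
  | succ m ih =>
    calc (J ⊔ B) ^ (m + 2) = (J ⊔ B) ^ (m + 1) * (J ⊔ B) := by rw [pow_succ]
    _ ≤ (J ^ (m + 1) ⊔ B * (J ⊔ B) ^ m) * (J ⊔ B) := Ideal.mul_mono_left ih
    _ = J ^ (m+1) * (J ⊔ B) ⊔ (B * (J ⊔ B) ^ m) * (J ⊔ B) := by rw [Ideal.sup_mul]
    _ ≤ J ^ (m + 2) ⊔ B * (J ⊔ B) ^ (m + 1) := by
        apply sup_le
        · rw [Ideal.mul_sup]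
          apply sup_le
          · exact le_sup_of_le_left (by rw [← pow_succ])
          · refine le_sup_of_le_right ?_
            rw [mul_comm]
            exact Ideal.mul_mono_right (Ideal.pow_right_mono le_sup_left _)
        · refine le_sup_of_le_right ?_
          rw [mul_assoc, ← pow_succ]

private lemma hqr_ofList_ofFn_eq {k : ℕ} (a : Fin k → R) :
    Ideal.ofList (List.ofFn a) = Ideal.span (Set.range a) :=
  congrArg Ideal.span (Set.ext fun r => List.mem_ofFn)

private lemma hqr_ofFn_split {k : ℕ} (a : Fin (k+1) → R) :
    List.ofFn a = List.ofFn (fun i : Fin k => a i.castSucc) ++ [a (Fin.last k)] := by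
  rw [List.ofFn_succ', List.concat_eq_append]

private lemma hqr_extract_reg {k : ℕ} (a : Fin (k+1) → R)
    (hw : RingTheory.Sequence.IsWeaklyRegular R (List.ofFn a)) :
    RingTheory.Sequence.IsWeaklyRegular R (List.ofFn (fun i : Fin k => a i.castSucc)) ∧
      ∀ x : R, a (Fin.last k) * x ∈ Ideal.span (Set.range (fun i : Fin k => a i.castSucc)) →
        x ∈ Ideal.span (Set.range (fun i : Fin k => a i.castSucc)) := by
  set a' : Fin k → R := fun i => a i.castSucc with ha'
  rw [hqr_ofFn_split] at hw
  obtain ⟨h1, h2⟩ := (RingTheory.Sequence.isWeaklyRegular_append_iff R _ _).mp hw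
  refine ⟨h1, ?_⟩
  have hsr := (RingTheory.Sequence.isWeaklyRegular_singleton_iff _ _).mp h2
  rw [hqr_ofList_ofFn_eq] at hsr
  intro x hx
  have hq : (Ideal.span (Set.range a') • ⊤ : Submodule R R) = Ideal.span (Set.range a') := by
    rw [smul_eq_mul, Ideal.mul_top]
  have h0 : (a (Fin.last k)) •
      (Submodule.Quotient.mk x : R ⧸ (Ideal.span (Set.range a') • ⊤ : Submodule R R)) = 0 := by
    rw [← Submodule.Quotient.mk_smul, Submodule.Quotient.mk_eq_zero, hq, smul_eq_mul]
    exact hx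
  have h3 : (Submodule.Quotient.mk x : R ⧸ (Ideal.span (Set.range a') • ⊤ : Submodule R R)) = 0 := by
    apply hsr
    show _ • _ = _ • _
    rw [h0, smul_zero]
  rw [Submodule.Quotient.mk_eq_zero, hq] at h3
  exact h3

private lemma hqr_coeff_rename_mem {σ τ : Type*} {f : σ → τ} (hf : Function.Injective f)
    (q : MvPolynomial σ R) (I : Ideal R) (h : ∀ m, q.coeff m ∈ I) :
    ∀ m, (MvPolynomial.rename f q).coeff m ∈ I := by
  intro m
  by_cases h0 : (MvPolynomial.rename f q).coeff m = 0
  · rw [h0]; exact zero_mem _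
  · obtain ⟨u, hu, _⟩ := MvPolynomial.coeff_rename_ne_zero f q m h0
    rw [← hu, MvPolynomial.coeff_rename_mapDomain f hf]; exact h u

private lemma hqr_coeff_mul_mem {σ : Type*} (p q : MvPolynomial σ R) (I : Ideal R)
    (h : ∀ m, q.coeff m ∈ I) : ∀ m, (p * q).coeff m ∈ I := by
  classical
  intro m
  rw [MvPolynomial.coeff_mul]
  exact Ideal.sum_mem _ fun x _ => Ideal.mul_mem_left _ _ (h x.2)

private lemma hqr_homog_zero_eq_C {σ : Type*} {φ : MvPolynomial σ R}
    (h : φ.IsHomogeneous 0) : φ = MvPolynomial.C (φ.coeff 0) := by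
  classical
  ext mm
  rw [MvPolynomial.coeff_C]
  by_cases h0 : mm = 0
  · simp [h0]
  · rw [if_neg (fun hh => h0 hh.symm)]
    by_contra hne
    exact h0 ((Finsupp.degree_eq_zero_iff mm).mp (hqr_isHom_iff.mp h hne))

private theorem hqr_main : ∀ (k : ℕ) (a : Fin k → R),
    RingTheory.Sequence.IsWeaklyRegular R (List.ofFn a) →
    ∀ (d : ℕ) (F : MvPolynomial (Fin k) R), F.IsHomogeneous d →
    MvPolynomial.eval a F ∈ (Ideal.span (Set.range a)) ^ (d + 1) →
    ∀ m, F.coeff m ∈ Ideal.span (Set.range a) := by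
  intro k
  induction k with
  | zero =>
    intro a _ d F hF heval m
    have hI : Ideal.span (Set.range a) = ⊥ := by
      rw [Set.range_eq_empty, Ideal.span_empty]
    rw [hI] at heval ⊢
    have heval0 : MvPolynomial.eval a F = 0 := by
      simpa using Ideal.pow_le_self (Nat.succ_ne_zero d) heval
    have hFC : F = MvPolynomial.C (F.coeff 0) := MvPolynomial.eq_C_of_isEmpty F
    have hm0 : m = 0 := Finsupp.ext (fun i => isEmptyElim i)
    rw [hm0, Ideal.mem_bot]
    rw [hFC, MvPolynomial.eval_C] at heval0
    simpa using heval0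
  | succ k ih =>
    intro a hw
    obtain ⟨hw', hlast⟩ := hqr_extract_reg a hw
    set a' : Fin k → R := fun i => a i.castSucc with ha'
    set J : Ideal R := Ideal.span (Set.range a') with hJ
    set I : Ideal R := Ideal.span (Set.range a) with hI
    set b : R := a (Fin.last k) with hb
    have IHk := ih a' hw'
    have hJI : J ≤ I := Ideal.span_mono (by rintro _ ⟨i, rfl⟩; exact ⟨i.castSucc, rfl⟩)
    have hbI : b ∈ I := Ideal.subset_span (Set.mem_range_self _)
    have hIJb : I = J ⊔ Ideal.span {b} := by
      apply le_antisymm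
      · rw [hI, Ideal.span_le]
        rintro _ ⟨i, rfl⟩
        induction i using Fin.lastCases with
        | last => exact Submodule.mem_sup_right (Ideal.subset_span rfl)
        | cast j =>
          exact Submodule.mem_sup_left (show a' j ∈ J from
            Ideal.subset_span (Set.mem_range_self j))
      · exact sup_le hJI (Ideal.span_le.mpr (by simpa using hbI))
    -- Lemma A : a_last is a nonzerodivisor mod every power of J
    have lemA : ∀ (n : ℕ) (x : R), b * x ∈ J ^ n → x ∈ J ^ n := by
      intro n
      induction n with
      | zero => intro x _; simpa using Submodule.mem_top
      | succ n ihn =>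
        intro x hx
        have hx' : x ∈ J ^ n := ihn x (Ideal.pow_le_pow_right (Nat.le_succ n) hx)
        obtain ⟨P, hP, hPe⟩ := (hqr_mem_pow_iff a').mp hx'
        have h2 : MvPolynomial.eval a' (MvPolynomial.C b * P) ∈ J ^ (n + 1) := by
          rw [_root_.map_mul, MvPolynomial.eval_C, hPe]; exact hx
        have h3 := IHk n (MvPolynomial.C b * P) (hP.C_mul b) h2
        have h4 : ∀ mm, P.coeff mm ∈ J := by
          intro mm
          apply hlast
          have := h3 mm
          rwa [MvPolynomial.coeff_C_mul] at this
        have h5 := hqr_eval_mem_mul_pow a' hP J h4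
        rw [hPe, ← pow_succ'] at h5
        exact h5
    -- Lemma B : polynomials in the first k variables
    have lemB : ∀ (e : ℕ) (G : MvPolynomial (Fin k) R), G.IsHomogeneous e →
        MvPolynomial.eval a' G ∈ I ^ (e + 1) → ∀ mm, G.coeff mm ∈ I := by
      intro e
      cases e with
      | zero =>
        intro G hG hev mm
        have hC := hqr_homog_zero_eq_C hG
        by_cases h0 : mm = 0
        · rw [pow_one] at hev
          rw [hC] at hev
          rw [MvPolynomial.eval_C] at hev
          rw [h0]; exact hev
        · rw [hC, MvPolynomial.coeff_C, if_neg (fun hh => h0 hh.symm)]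
          exact zero_mem _
      | succ e =>
        intro G hG hev
        have h1 : MvPolynomial.eval a' G ∈ J ^ (e + 2) ⊔ Ideal.span {b} * I ^ (e + 1) := by
          have hle := hqr_pow_sup_le J (Ideal.span {b}) (e + 1)
          rw [← hIJb] at hle
          exact hle hev
        obtain ⟨u, hu, w, hw2, huw⟩ := Submodule.mem_sup.mp h1
        obtain ⟨v, hv, hbv⟩ := Ideal.mem_span_singleton_mul.mp hw2
        have hbv' : b * v ∈ J ^ (e + 1) := by
          have hevJ : MvPolynomial.eval a' G ∈ J ^ (e + 1) := hqr_eval_mem_pow a' hG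
          have huJ : u ∈ J ^ (e + 1) := Ideal.pow_le_pow_right (Nat.le_succ _) hu
          have : b * v = MvPolynomial.eval a' G - u := by
            rw [hbv, ← huw]; ring
          rw [this]; exact sub_mem hevJ huJ
        have hvJ : v ∈ J ^ (e + 1) := lemA _ _ hbv'
        obtain ⟨W, hW, hWe⟩ := (hqr_mem_pow_iff a').mp hvJ
        have hG2 : (G - MvPolynomial.C b * W).IsHomogeneous (e + 1) := hG.sub (hW.C_mul b)
        have hev2 : MvPolynomial.eval a' (G - MvPolynomial.C b * W) ∈ J ^ (e + 2) := by
          have : MvPolynomial.eval a' (G - MvPolynomial.C b * W) = u := by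
            rw [map_sub, _root_.map_mul, MvPolynomial.eval_C, hWe]
            linear_combination -huw - hbv
          rw [this]; exact hu
        have h5 := IHk (e + 1) _ hG2 hev2
        intro mm
        have : G.coeff mm = (G - MvPolynomial.C b * W).coeff mm + b * W.coeff mm := by
          rw [MvPolynomial.coeff_sub, MvPolynomial.coeff_C_mul]; ring
        rw [this]
        exact add_mem (hJI (h5 mm)) (Ideal.mul_mem_right _ _ hbI)
    -- main induction on the degree
    intro d
    induction d with
    | zero =>
      intro F hF hev mm
      have hC := hqr_homog_zero_eq_C hF
      by_cases h0 : mm = 0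
      · rw [pow_one] at hev
        rw [hC, MvPolynomial.eval_C] at hev
        rw [h0]; exact hev
      · rw [hC, MvPolynomial.coeff_C, if_neg (fun hh => h0 hh.symm)]
        exact zero_mem _
    | succ d ihd =>
      intro F hF hev
      set s : Fin (k+1) →₀ ℕ := Finsupp.single (Fin.last k) 1 with hs
      set H : MvPolynomial (Fin (k+1)) R := MvPolynomial.divMonomial F s with hH
      set G : MvPolynomial (Fin (k+1)) R := MvPolynomial.modMonomial F s with hG
      have hsplitF : MvPolynomial.monomial s 1 * H + G = F :=
        MvPolynomial.divMonomial_add_modMonomial F s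
      have hdegs : Finsupp.degree s = 1 := by
        simp [hs, Finsupp.degree_eq_weight_one, Finsupp.weight_apply, Finsupp.sum_single_index]
      have hHhom : H.IsHomogeneous d := by
        rw [hqr_isHom_iff]
        intro mm hmm
        rw [hH, MvPolynomial.coeff_divMonomial] at hmm
        have := hqr_isHom_iff.mp hF hmm
        rw [Finsupp.degree_eq_weight_one, map_add, ← Finsupp.degree_eq_weight_one, hdegs] at this
        omega
      have hGhom : G.IsHomogeneous (d + 1) := by
        rw [hqr_isHom_iff]
        intro mm hmm
        by_cases hle : s ≤ mm
        · exact absurd (MvPolynomial.coeff_modMonomial_of_le F hle) hmm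
        · rw [hG, MvPolynomial.coeff_modMonomial_of_not_le F hle] at hmm
          exact hqr_isHom_iff.mp hF hmm
      have hGlast : ∀ mm : Fin (k+1) →₀ ℕ, G.coeff mm ≠ 0 → mm (Fin.last k) = 0 := by
        intro mm hmm
        by_contra hne
        exact hmm (MvPolynomial.coeff_modMonomial_of_le F
          (Finsupp.single_le_iff.mpr (Nat.one_le_iff_ne_zero.mpr hne)))
      have hvars : ↑G.vars ⊆ Set.range (Fin.castSucc (n := k)) := by
        intro i hi
        obtain ⟨dd, hdd, hidd⟩ := (MvPolynomial.mem_vars i).mp hi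
        have h1 : dd (Fin.last k) = 0 := hGlast dd (MvPolynomial.mem_support_iff.mp hdd)
        have h2 : dd i ≠ 0 := Finsupp.mem_support_iff.mp hidd
        exact Fin.exists_castSucc_eq.mpr (fun hli => h2 (hli ▸ h1))
      obtain ⟨q, hq⟩ := MvPolynomial.exists_rename_eq_of_vars_subset_range G Fin.castSucc
        (Fin.castSucc_injective k) hvars
      have hqhom : q.IsHomogeneous (d + 1) := by
        rw [← MvPolynomial.IsHomogeneous.rename_isHomogeneous_iff (Fin.castSucc_injective k), hq]
        exact hGhom
      have hqeval : MvPolynomial.eval a' q = MvPolynomial.eval a G := by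
        rw [← hq, MvPolynomial.eval_rename]
        rfl
      have hevmon : MvPolynomial.eval a (MvPolynomial.monomial s 1) = b := by
        rw [MvPolynomial.eval_monomial]
        simp [hs, hb, Finsupp.prod_single_index]
      have hevalsplit : MvPolynomial.eval a F = b * MvPolynomial.eval a H
          + MvPolynomial.eval a' q := by
        rw [hqeval, ← hsplitF, map_add, _root_.map_mul, hevmon]
      have h1 : MvPolynomial.eval a F ∈ J ^ (d + 2) ⊔ Ideal.span {b} * I ^ (d + 1) := by
        have hle := hqr_pow_sup_le J (Ideal.span {b}) (d + 1)
        rw [← hIJb] at hle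
        exact hle hev
      obtain ⟨u, hu, w, hw2, huw⟩ := Submodule.mem_sup.mp h1
      obtain ⟨v, hv, hbv⟩ := Ideal.mem_span_singleton_mul.mp hw2
      have hHv : MvPolynomial.eval a H - v ∈ J ^ (d + 1) := by
        apply lemA
        have hkey : b * (MvPolynomial.eval a H - v) = u - MvPolynomial.eval a' q := by
          have h2 : u + b * v = MvPolynomial.eval a F := by rw [hbv]; exact huw
          rw [hevalsplit] at h2
          linear_combination -h2
        rw [hkey]
        exact sub_mem (Ideal.pow_le_pow_right (Nat.le_succ _) hu) (hqr_eval_mem_pow a' hqhom)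
      have hHI : MvPolynomial.eval a H ∈ I ^ (d + 1) := by
        have h6 := add_mem (Ideal.pow_right_mono hJI (d + 1) hHv) hv
        simpa using h6
      have hHc := ihd H hHhom hHI
      have hqev2 : MvPolynomial.eval a' q ∈ I ^ (d + 2) := by
        have h7 : MvPolynomial.eval a' q = MvPolynomial.eval a F
            - b * MvPolynomial.eval a H := by
          rw [hevalsplit]; ring
        rw [h7]
        refine sub_mem hev ?_
        rw [show d + 1 + 1 = 1 + (d + 1) by ring, pow_add, pow_one]
        exact Ideal.mul_mem_mul hbI hHI
      have hqc := lemB (d + 1) q hqhom hqev2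
      intro mm
      have h8 : F.coeff mm = (MvPolynomial.monomial s 1 * H).coeff mm + G.coeff mm := by
        rw [← hsplitF, MvPolynomial.coeff_add]
      rw [h8]
      refine add_mem (hqr_coeff_mul_mem _ _ _ hHc mm) ?_
      rw [← hq]
      exact hqr_coeff_rename_mem (Fin.castSucc_injective k) q I hqc mm

end QuasiRegularAux

/-- If `a_1, …, a_k` is a regular sequence in a commutative ring `R` and
`F` is a homogeneous polynomial in `k` variables over `R` with `F(a_1,…,a_k) = 0`,
then every coefficient of `F` lies in the ideal `(a_1,…,a_k)`. -/
theorem stmt0 {R : Type*} [CommRing R] {k : ℕ} (a : Fin k → R)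
    (hreg : RingTheory.Sequence.IsRegular R (List.ofFn a))
    (d : ℕ) (F : MvPolynomial (Fin k) R) (hF : F.IsHomogeneous d)
    (hzero : MvPolynomial.eval a F = 0) :
    ∀ m : Fin k →₀ ℕ, F.coeff m ∈ Ideal.span (Set.range a) := by
  exact hqr_main k a hreg.toIsWeaklyRegular d F hF (hzero ▸ zero_mem _)
end

section
/- Let p_0,...,p_m and q_0,...,q_m be homogeneous polynomials in ℂ[x_1,...,x_n] with each p_a of degree 2 and each q_a of degree 3, satisfying p_0 q_0 + p_1 q_1 + ... + p_m q_m = 0. If p_0,...,p_m form a regular sequence, then there exist homogeneous linear polynomials r_{ab} (0 ≤ a,b ≤ m) with r_{ab} = −r_{ba} such that q_a = Σ_b r_{ab} p_b for every a. -/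
open MvPolynomial

private lemma hc_mul {σ : Type*} {R : Type*} [CommRing R] (P t : MvPolynomial σ R)
    (hP : P.IsHomogeneous 2) :
    homogeneousComponent 3 (t * P) = homogeneousComponent 1 t * P := by
  have h1 : t * P = ∑ i ∈ Finset.range (t.totalDegree + 1), homogeneousComponent i t * P := by
    rw [← Finset.sum_mul, sum_homogeneousComponent]
  have key : ∀ i, homogeneousComponent 3 (homogeneousComponent i t * P) =
      if i = 1 then homogeneousComponent 1 t * P else 0 := by
    intro i
    have hhom : (homogeneousComponent i t * P).IsHomogeneous (i + 2) :=
      (homogeneousComponent_isHomogeneous i t).mul hP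
    rw [homogeneousComponent_of_mem hhom]
    by_cases hi : i = 1
    · subst hi; simp
    · rw [if_neg (by omega), if_neg hi]
  rw [h1, map_sum]
  simp_rw [key]
  rw [Finset.sum_ite_eq' (Finset.range (t.totalDegree + 1)) 1
    (fun _ => homogeneousComponent 1 t * P)]
  by_cases h : 1 ∈ Finset.range (t.totalDegree + 1)
  · rw [if_pos h]
  · rw [if_neg h]
    have : t.totalDegree < 1 := by simpa using h
    rw [homogeneousComponent_eq_zero _ _ this, zero_mul]

private lemma exists_lin {n k : ℕ} (p : Fin k → MvPolynomial (Fin n) ℂ)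
    {Q : MvPolynomial (Fin n) ℂ} (hp : ∀ a, (p a).IsHomogeneous 2) (hQ : Q.IsHomogeneous 3)
    (hmem : Q ∈ Ideal.span (Set.range p)) :
    ∃ s : Fin k → MvPolynomial (Fin n) ℂ,
      (∀ a, (s a).IsHomogeneous 1) ∧ Q = ∑ a, s a * p a := by
  obtain ⟨t, ht⟩ := Ideal.mem_span_range_iff_exists_fun.mp hmem
  refine ⟨fun a => homogeneousComponent 1 (t a),
    fun a => homogeneousComponent_isHomogeneous 1 _, ?_⟩
  have h3 : homogeneousComponent 3 Q = Q := by
    rw [homogeneousComponent_of_mem hQ, if_pos rfl]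
  calc Q = homogeneousComponent 3 Q := h3.symm
    _ = homogeneousComponent 3 (∑ a, t a * p a) := by rw [ht]
    _ = ∑ a, homogeneousComponent 3 (t a * p a) := map_sum _ _ _
    _ = ∑ a, homogeneousComponent 1 (t a) * p a :=
        Finset.sum_congr rfl fun a _ => hc_mul (p a) (t a) (hp a)

private lemma ofList_ofFn_eq {k : ℕ} {R : Type*} [CommRing R] (g : Fin k → R) :
    Ideal.ofList (List.ofFn g) = Ideal.span (Set.range g) := by
  have h : {r : R | r ∈ List.ofFn g} = Set.range g := Set.ext fun x => List.mem_ofFn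
  show Ideal.span _ = _
  rw [h]

private theorem stmt4_aux (m : ℕ) : ∀ {n : ℕ} (p q : Fin (m + 1) → MvPolynomial (Fin n) ℂ),
    (∀ a, (p a).IsHomogeneous 2) → (∀ a, (q a).IsHomogeneous 3) →
    (∑ a, p a * q a = 0) →
    RingTheory.Sequence.IsRegular (MvPolynomial (Fin n) ℂ) (List.ofFn p) →
    ∃ r : Fin (m + 1) → Fin (m + 1) → MvPolynomial (Fin n) ℂ,
      (∀ a b, (r a b).IsHomogeneous 1) ∧ (∀ a b, r a b = - r b a) ∧
      ∀ a, q a = ∑ b, r a b * p b := by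
  induction m with
  | zero =>
    intro n p q hp hq hrel hreg
    have hsreg : IsSMulRegular (MvPolynomial (Fin n) ℂ) (p 0) := by
      have hW := hreg.toIsWeaklyRegular
      have h : List.ofFn p = [p 0] := by simp [List.ofFn_succ]
      rw [h, RingTheory.Sequence.isWeaklyRegular_singleton_iff] at hW
      exact hW
    have h0 : p 0 * q 0 = 0 := by simpa using hrel
    have hq0 : q 0 = 0 := by
      apply hsreg
      simpa [smul_eq_mul] using h0
    refine ⟨fun _ _ => 0, fun _ _ => isHomogeneous_zero _ _ _, fun _ _ => by simp, fun a => ?_⟩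
    have ha : a = 0 := Fin.fin_one_eq_zero a
    simp [ha, hq0]
  | succ m IH =>
    intro n p q hp hq hrel hreg
    -- split regularity
    have hW := hreg.toIsWeaklyRegular
    rw [List.ofFn_succ', List.concat_eq_append,
      RingTheory.Sequence.isWeaklyRegular_append_iff] at hW
    obtain ⟨hW1, hW2⟩ := hW
    rw [RingTheory.Sequence.isWeaklyRegular_singleton_iff] at hW2
    have hsmultop : ((Ideal.ofList (List.ofFn fun i : Fin (m+1) => p i.castSucc)) • ⊤ :
        Submodule (MvPolynomial (Fin n) ℂ) (MvPolynomial (Fin n) ℂ))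
        = Ideal.span (Set.range fun i : Fin (m+1) => p i.castSucc) := by
      rw [Ideal.smul_eq_mul, Ideal.mul_top, ofList_ofFn_eq]
    -- the relation split
    have hrel' : p (Fin.last (m+1)) * q (Fin.last (m+1))
        = - ∑ i : Fin (m+1), p i.castSucc * q i.castSucc := by
      rw [Fin.sum_univ_castSucc] at hrel
      linear_combination hrel
    have hmem : p (Fin.last (m+1)) * q (Fin.last (m+1))
        ∈ Ideal.span (Set.range fun i : Fin (m+1) => p i.castSucc) := by
      rw [hrel']
      exact neg_mem (Ideal.sum_mem _ fun i _ =>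
        Ideal.mul_mem_right _ _ (Ideal.subset_span ⟨i, rfl⟩))
    -- q last ∈ I
    have hqlast : q (Fin.last (m+1))
        ∈ Ideal.span (Set.range fun i : Fin (m+1) => p i.castSucc) := by
      have h2 : (Submodule.Quotient.mk (q (Fin.last (m+1))) :
          MvPolynomial (Fin n) ℂ ⧸ ((Ideal.ofList (List.ofFn fun i : Fin (m+1) => p i.castSucc)) • ⊤ :
            Submodule (MvPolynomial (Fin n) ℂ) (MvPolynomial (Fin n) ℂ))) = 0 := by
        refine hW2 ?_
        beta_reduce
        rw [smul_zero, ← Submodule.Quotient.mk_smul, Submodule.Quotient.mk_eq_zero,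
          smul_eq_mul, Ideal.mul_top, ofList_ofFn_eq]
        exact hmem
      rwa [Submodule.Quotient.mk_eq_zero, hsmultop] at h2
    obtain ⟨s, hs1, hs2⟩ := exists_lin (fun i : Fin (m+1) => p i.castSucc)
      (fun a => hp _) (hq _) hqlast
    -- new q's
    have hq' : ∀ a : Fin (m+1),
        (q a.castSucc + s a * p (Fin.last (m+1))).IsHomogeneous 3 := fun a =>
      (hq _).add ((hs1 a).mul (hp _))
    have hrel2 : ∑ a : Fin (m+1),
        (fun i : Fin (m+1) => p i.castSucc) a * (q a.castSucc + s a * p (Fin.last (m+1))) = 0 := by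
      simp only [mul_add, Finset.sum_add_distrib]
      have e1 : ∑ a : Fin (m+1), p a.castSucc * (s a * p (Fin.last (m+1))) =
          q (Fin.last (m+1)) * p (Fin.last (m+1)) := by
        rw [hs2, Finset.sum_mul]
        exact Finset.sum_congr rfl fun a _ => by ring
      rw [e1]
      linear_combination hrel'
    have hreg' : RingTheory.Sequence.IsRegular (MvPolynomial (Fin n) ℂ)
        (List.ofFn fun i : Fin (m+1) => p i.castSucc) := by
      constructor
      · exact hW1
      · intro h
        apply hreg.top_ne_smul
        refine le_antisymm ?_ le_top
        calc (⊤ : Submodule (MvPolynomial (Fin n) ℂ) (MvPolynomial (Fin n) ℂ))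
            = Ideal.ofList (List.ofFn fun i : Fin (m+1) => p i.castSucc) • ⊤ := h
          _ ≤ Ideal.ofList (List.ofFn p) • ⊤ := by
              apply Submodule.smul_mono_left
              rw [List.ofFn_succ' p, List.concat_eq_append, Ideal.ofList_append]
              exact le_sup_left
    obtain ⟨r', hr'1, hr'2, hr'3⟩ := IH (fun i : Fin (m+1) => p i.castSucc)
      (fun a => q a.castSucc + s a * p (Fin.last (m+1)))
      (fun a => hp _) hq' hrel2 hreg'
    classical
    refine ⟨Fin.snoc (fun a' => Fin.snoc (fun b' => r' a' b') (-(s a')))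
      (Fin.snoc (fun b' => s b') 0), ?_, ?_, ?_⟩
    · intro a b
      induction a using Fin.lastCases with
      | last =>
        induction b using Fin.lastCases with
        | last => simp only [Fin.snoc_last]; exact isHomogeneous_zero _ _ _
        | cast b' => simp only [Fin.snoc_last, Fin.snoc_castSucc]; exact hs1 b'
      | cast a' =>
        induction b using Fin.lastCases with
        | last => simp only [Fin.snoc_last, Fin.snoc_castSucc]; exact (hs1 a').neg
        | cast b' => simp only [Fin.snoc_castSucc]; exact hr'1 a' b'
    · intro a b
      induction a using Fin.lastCases with
      | last =>
        induction b using Fin.lastCases with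
        | last => simp only [Fin.snoc_last]; rw [neg_zero]
        | cast b' => simp only [Fin.snoc_last, Fin.snoc_castSucc, neg_neg]
      | cast a' =>
        induction b using Fin.lastCases with
        | last => simp only [Fin.snoc_last, Fin.snoc_castSucc]
        | cast b' => simp only [Fin.snoc_castSucc]; exact hr'2 a' b'
    · intro a
      induction a using Fin.lastCases with
      | last =>
        rw [Fin.sum_univ_castSucc]
        simp only [Fin.snoc_last, Fin.snoc_castSucc]
        rw [hs2]
        simp
      | cast a' =>
        rw [Fin.sum_univ_castSucc]
        simp only [Fin.snoc_last, Fin.snoc_castSucc]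
        have h3 := hr'3 a'
        linear_combination h3

/-- Condition B derivation: if `p_0,…,p_m` (degree 2) and `q_0,…,q_m` (degree 3) are
homogeneous with `Σ p_a q_a = 0` and `p_0,…,p_m` is a regular sequence, then
`q_a = Σ_b r_{ab} p_b` for homogeneous linear `r_{ab}` with `r_{ab} = −r_{ba}`. -/
theorem stmt4 {n m : ℕ} (p q : Fin (m + 1) → MvPolynomial (Fin n) ℂ)
    (hp : ∀ a, (p a).IsHomogeneous 2) (hq : ∀ a, (q a).IsHomogeneous 3)
    (hrel : ∑ a, p a * q a = 0)
    (hreg : RingTheory.Sequence.IsRegular (MvPolynomial (Fin n) ℂ) (List.ofFn p)) :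
    ∃ r : Fin (m + 1) → Fin (m + 1) → MvPolynomial (Fin n) ℂ,
      (∀ a b, (r a b).IsHomogeneous 1) ∧ (∀ a b, r a b = - r b a) ∧
      ∀ a, q a = ∑ b, r a b * p b := by
  exact stmt4_aux m p q hp hq hrel hreg
end

section
/- Let r_{ab} (0 ≤ a,b ≤ m) be elements of a commutative ring R and p_0,...,p_m a regular sequence of homogeneous degree-2 polynomials in ℂ[x_1,...,x_n] with each r_{ab} homogeneous of degree 1. If Σ_{a,b} (r_{ab} + r_{ba}) p_a p_b = 0, then r_{ab} + r_{ba} = 0 for all a,b. -/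
open scoped Pointwise

/-- A double sum `∑ a b, (q a * q b) • B a b` with `B` antisymmetric (and zero diagonal)
vanishes. -/
lemma antisym_double_sum_eq_zero {R M : Type*} [CommRing R] [AddCommGroup M] [Module R M]
    {k : ℕ} (q : Fin k → R) (B : Fin k → Fin k → M)
    (hdiag : ∀ a, B a a = 0) (hanti : ∀ a b, B a b = - B b a) :
    ∑ a, ∑ b, (q a * q b) • B a b = 0 := by
  rw [← Finset.sum_product']
  apply Finset.sum_ninvolution (fun x => (x.2, x.1))
  · intro ⟨a, b⟩
    simp only
    rw [hanti b a, mul_comm (q b) (q a), smul_neg]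
    exact add_neg_cancel _
  · intro ⟨a, b⟩ hne
    simp only [Prod.mk.injEq, ne_eq, not_and]
    intro hba hab
    apply hne
    subst hba
    rw [hdiag, smul_zero]
  · intro a; simp
  · intro a; rfl

/-- Koszul syzygy lemma: any relation on a weakly regular sequence has an
antisymmetric coefficient matrix. -/
lemma koszul_syzygy {R : Type*} [CommRing R] :
    ∀ {k : ℕ} {M : Type*} [AddCommGroup M] [Module R M] (q : Fin k → R),
      RingTheory.Sequence.IsWeaklyRegular M (List.ofFn q) →
      ∀ s : Fin k → M, ∑ a, q a • s a = 0 →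
      ∃ A : Fin k → Fin k → M, (∀ a, A a a = 0) ∧ (∀ a b, A a b = - A b a) ∧
        (∀ a, s a = ∑ b, q b • A a b) := by
  intro k
  induction k with
  | zero =>
    intro M _ _ q _ s _
    exact ⟨fun a => a.elim0, fun a => a.elim0, fun a => a.elim0, fun a => a.elim0⟩
  | succ k ih =>
    intro M _ _ q hreg s hrel
    rw [List.ofFn_succ, RingTheory.Sequence.isWeaklyRegular_cons_iff] at hreg
    obtain ⟨h0, htail⟩ := hreg
    set N := QuotSMulTop (q 0) M with hN
    let π : M →ₗ[R] N := Submodule.mkQ _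
    have hπ : Function.Surjective π := Submodule.mkQ_surjective _
    have hker : ∀ x : M, π x = 0 ↔ x ∈ (q 0 • (⊤ : Submodule R M)) := by
      intro x
      exact Submodule.Quotient.mk_eq_zero _
    have hq0 : ∀ x : M, π (q 0 • x) = 0 := by
      intro x
      rw [hker]
      exact Submodule.smul_mem_pointwise_smul x (q 0) ⊤ trivial
    -- the relation descends to N
    have hrelN : ∑ a : Fin k, (fun i => q (Fin.succ i)) a • π (s a.succ) = 0 := by
      have := congrArg π hrel
      rw [map_zero, map_sum, Fin.sum_univ_succ, hq0] at this
      simpa [map_smul] using this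
    obtain ⟨Abar, hAdiag, hAanti, hAs⟩ :=
      ih (fun i => q (Fin.succ i)) htail (fun a => π (s a.succ)) hrelN
    -- lift Abar to an antisymmetric matrix over M
    classical
    choose C hC using fun a b => hπ (Abar a b)
    let B : Fin k → Fin k → M := fun a b =>
      if a = b then 0 else if a < b then C a b else - C b a
    have hBdiag : ∀ a, B a a = 0 := fun a => by simp [B]
    have hBanti : ∀ a b, B a b = - B b a := by
      intro a b
      rcases lt_trichotomy a b with h | h | h
      · simp [B, h, h.ne, h.ne', not_lt_of_gt h]
      · simp [B, h]
      · simp [B, h, h.ne, h.ne', not_lt_of_gt h]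
    have hBlift : ∀ a b, π (B a b) = Abar a b := by
      intro a b
      rcases lt_trichotomy a b with h | h | h
      · simp [B, h, h.ne, hC]
      · simp [B, h, hAdiag]
      · simp only [B, h.ne', if_false, not_lt_of_gt h, if_false, map_neg, hC]
        rw [← hAanti]
    -- the defect of each lifted relation lies in (q 0) • ⊤
    have hdef : ∀ a : Fin k, π (s a.succ - ∑ b, q b.succ • B a b) = 0 := by
      intro a
      simp [map_sub, map_smul, hBlift, hAs a]
    have hdef' : ∀ a : Fin k, ∃ c : M,
        s a.succ = q 0 • c + ∑ b, q b.succ • B a b := by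
      intro a
      have hmem := (hker _).mp (hdef a)
      rw [← SetLike.mem_coe, Submodule.coe_pointwise_smul] at hmem
      obtain ⟨y, -, hy⟩ := Set.mem_smul_set.mp hmem
      refine ⟨y, ?_⟩
      rw [hy]
      abel
    choose c hc using hdef'
    -- plug back into the original relation
    have hz := antisym_double_sum_eq_zero (fun i : Fin k => q i.succ) B hBdiag hBanti
    beta_reduce at hz
    have key : q 0 • (s 0 + ∑ a : Fin k, q a.succ • c a) = 0 := by
      calc q 0 • (s 0 + ∑ a : Fin k, q a.succ • c a)
          = q 0 • s 0 + ∑ a : Fin k, (q a.succ * q 0) • c a := by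
            rw [smul_add, Finset.smul_sum]
            congr 1
            refine Finset.sum_congr rfl fun a _ => ?_
            rw [smul_smul, mul_comm]
        _ = (∑ a, q a • s a) -
              ∑ a : Fin k, ∑ b : Fin k, (q a.succ * q b.succ) • B a b := by
            rw [Fin.sum_univ_succ]
            simp only [hc, smul_add, Finset.smul_sum, Finset.sum_add_distrib, smul_smul]
            abel
        _ = 0 := by rw [hrel, hz, sub_zero]
    have hs0 : s 0 + ∑ a : Fin k, q a.succ • c a = 0 :=
      h0 (show q 0 • _ = q 0 • (0 : M) by rw [smul_zero]; exact key)
    have hs0' : s 0 = - ∑ a : Fin k, q a.succ • c a :=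
      eq_neg_of_add_eq_zero_left hs0
    -- assemble the full antisymmetric matrix
    refine ⟨fun a b =>
      Fin.cases (Fin.cases 0 (fun j => - c j) b)
        (fun i => Fin.cases (c i) (fun j => B i j) b) a, ?_, ?_, ?_⟩
    · intro a
      refine Fin.cases ?_ (fun i => ?_) a
      · rfl
      · exact hBdiag i
    · intro a b
      refine Fin.cases ?_ (fun i => ?_) a <;>
        refine Fin.cases ?_ (fun j => ?_) b
      · simp
      · simp
      · simp
      · exact hBanti i j
    · intro a
      refine Fin.cases ?_ (fun i => ?_) a
      · rw [hs0', Fin.sum_univ_succ]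
        simp [Finset.sum_neg_distrib]
      · rw [hc i, Fin.sum_univ_succ]
        simp

/-- The degree-1 homogeneous component of a product with a degree-2 homogeneous
polynomial vanishes. -/
lemma homogeneousComponent_one_mul_eq_zero {n : ℕ} (p d : MvPolynomial (Fin n) ℂ)
    (hp : p.IsHomogeneous 2) :
    MvPolynomial.homogeneousComponent 1 (p * d) = 0 := by
  ext μ
  rw [MvPolynomial.coeff_homogeneousComponent, MvPolynomial.coeff_zero]
  split_ifs with hμ
  · rw [MvPolynomial.coeff_mul]
    apply Finset.sum_eq_zero
    intro x hx
    rw [Finset.HasAntidiagonal.mem_antidiagonal] at hx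
    have hle : x.1.degree + x.2.degree = μ.degree := by
      rw [← hx]
      simp [Finsupp.degree_eq_weight_one, map_add]
    have hne : x.1.degree ≠ 2 := by omega
    rw [hp.coeff_eq_zero hne, zero_mul]
  · rfl

/-- If `r_{ab}` are homogeneous of degree 1 and `p_0,…,p_m` is a regular sequence of
homogeneous degree-2 polynomials in `ℂ[x_1,…,x_n]` with
`Σ_{a,b} (r_{ab} + r_{ba}) p_a p_b = 0`, then `r_{ab} + r_{ba} = 0` for all `a, b`. -/
theorem stmt6 {n m : ℕ} (r : Fin (m + 1) → Fin (m + 1) → MvPolynomial (Fin n) ℂ)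
    (hr : ∀ a b, (r a b).IsHomogeneous 1)
    (p : Fin (m + 1) → MvPolynomial (Fin n) ℂ)
    (hp : ∀ a, (p a).IsHomogeneous 2)
    (hreg : RingTheory.Sequence.IsRegular (MvPolynomial (Fin n) ℂ) (List.ofFn p))
    (hrel : ∑ a, ∑ b, (r a b + r b a) * (p a * p b) = 0) :
    ∀ a b, r a b + r b a = 0 := by
  have hwreg := hreg.toIsWeaklyRegular
  -- first application of the syzygy lemma
  have hrel1 : ∑ a, p a • (∑ b, p b • (r a b + r b a)) = 0 := by
    rw [← hrel]
    apply Finset.sum_congr rfl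
    intro a _
    rw [smul_eq_mul, Finset.mul_sum]
    apply Finset.sum_congr rfl
    intro b _
    simp only [smul_eq_mul]
    ring
  obtain ⟨A, hAdiag, hAanti, hAs⟩ := koszul_syzygy p hwreg _ hrel1
  -- second application, for each fixed `a`
  have hrel2 : ∀ a, ∑ b, p b • ((r a b + r b a) - A a b) = 0 := by
    intro a
    simp only [smul_sub, Finset.sum_sub_distrib]
    rw [sub_eq_zero, ← hAs a]
  have hB : ∀ a, ∃ B : Fin (m + 1) → Fin (m + 1) → MvPolynomial (Fin n) ℂ,
      ∀ b, (r a b + r b a) - A a b = ∑ c, p c • B b c := by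
    intro a
    obtain ⟨B, -, -, hBs⟩ := koszul_syzygy p hwreg _ (hrel2 a)
    exact ⟨B, hBs⟩
  choose B hBs using hB
  -- symmetrize: `2 (r a b + r b a)` lies in the ideal generated by the `p c`
  intro a b
  have hsym : (r a b + r b a) + (r b a + r a b) = ∑ c, p c * (B a b c + B b a c) := by
    have h1 := hBs a b
    have h2 := hBs b a
    have h3 : (r a b + r b a) + (r b a + r a b) =
        ((r a b + r b a) - A a b) + ((r b a + r a b) - A b a) := by
      rw [hAanti a b]; ring
    rw [h3, h1, h2, ← Finset.sum_add_distrib]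
    apply Finset.sum_congr rfl
    intro c _
    simp only [smul_eq_mul]
    ring
  -- but the LHS is homogeneous of degree 1, while the RHS has no degree-1 component
  have hth : ((r a b + r b a) + (r b a + r a b)).IsHomogeneous 1 :=
    ((hr a b).add (hr b a)).add ((hr b a).add (hr a b))
  have hcomp : MvPolynomial.homogeneousComponent 1 ((r a b + r b a) + (r b a + r a b)) =
      (r a b + r b a) + (r b a + r a b) := by
    have := MvPolynomial.homogeneousComponent_of_mem (m := 1)
      ((MvPolynomial.mem_homogeneousSubmodule 1 _).mpr hth)
    simpa using this
  have hzero : (r a b + r b a) + (r b a + r a b) = 0 := by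
    rw [← hcomp, hsym, map_sum]
    apply Finset.sum_eq_zero
    intro c _
    exact homogeneousComponent_one_mul_eq_zero _ _ (hp c)
  have h2t : (2 : ℂ) • (r a b + r b a) = 0 := by
    rw [two_smul]
    calc (r a b + r b a) + (r a b + r b a)
        = (r a b + r b a) + (r b a + r a b) := by ring
      _ = 0 := hzero
  rcases smul_eq_zero.mp h2t with h | h
  · exact absurd h two_ne_zero
  · exact h
end
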